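/- Take b(x) = χ_{(2,∞)}(x) ∈ BMO(ℝ) and f₀(x) = χ_{(0,2)}(x) - χ_{(-2,0)}(x) (a multiple of an H¹(ℝ) atom). Then for x > 3, |[b,H]f₀(x)| = 2/x, and consequently ∫_ℝ |[b,H]f₀(x)| dx = ∞; hence the commutator [b,H] is not bounded from H¹(ℝ) to L¹(ℝ). -/
import Mathlib


open MeasureTheory

/-- The one-dimensional Hardy operator `Hf(x) = (1/x) ∫₀ˣ f(t) dt`. -/
noncomputable def hardyOp1 (f : ℝ → ℝ) (x : ℝ) : ℝ :=
  x⁻¹ * ∫ t in (0:ℝ)..x, f t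

/-- The commutator `[b,H]f = b·Hf - H(bf)`. -/
noncomputable def hardyComm1 (b f : ℝ → ℝ) (x : ℝ) : ℝ :=
  b x * hardyOp1 f x - hardyOp1 (fun y => b y * f y) x

/-- `b = χ_{(2,∞)}`. -/
noncomputable def bInd : ℝ → ℝ := (Set.Ioi (2:ℝ)).indicator 1

/-- `f₀ = χ_{(0,2)} - χ_{(-2,0)}`. -/
noncomputable def fAtom : ℝ → ℝ := fun x =>
  (Set.Ioo (0:ℝ) 2).indicator 1 x - (Set.Ioo (-2:ℝ) 0).indicator 1 x

lemma bf_zero : (fun y => bInd y * fAtom y) = fun _ => (0:ℝ) := by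
  funext y
  by_cases h : 2 < y
  · have h1 : y ∉ Set.Ioo (0:ℝ) 2 := fun hy => absurd hy.2 (by linarith)
    have h2 : y ∉ Set.Ioo (-2:ℝ) 0 := fun hy => absurd hy.2 (by linarith)
    simp [fAtom, Set.indicator_of_notMem h1, Set.indicator_of_notMem h2]
  · have hb : bInd y = 0 := by simp [bInd, Set.indicator_apply, h]
    simp [hb]

lemma fAtom_int (x : ℝ) (hx : 2 ≤ x) : ∫ t in (0:ℝ)..x, fAtom t = 2 := by
  have h0x : (0:ℝ) ≤ x := by linarith
  have hcongr : ∀ t ∈ Set.uIcc (0:ℝ) x, fAtom t = (Set.Ioo (0:ℝ) 2).indicator 1 t := by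
    intro t ht
    rw [Set.uIcc_of_le h0x] at ht
    have hnm : t ∉ Set.Ioo (-2:ℝ) 0 := fun htm => absurd ht.1 (not_le.2 htm.2)
    simp [fAtom, Set.indicator_of_notMem hnm]
  rw [intervalIntegral.integral_congr hcongr, intervalIntegral.integral_of_le h0x,
    MeasureTheory.setIntegral_indicator measurableSet_Ioo]
  have hs : Set.Ioc (0:ℝ) x ∩ Set.Ioo 0 2 = Set.Ioo (0:ℝ) 2 := by
    apply Set.inter_eq_self_of_subset_right
    intro t ht; exact ⟨ht.1, le_trans ht.2.le hx⟩
  rw [hs]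
  simp [Real.volume_Ioo]

lemma comm_eq (x : ℝ) (hx : 3 < x) : hardyComm1 bInd fAtom x = 2 / x := by
  have hb : bInd x = 1 := by
    simp [bInd, Set.indicator_apply, Set.mem_Ioi]; linarith
  have h2 : hardyOp1 (fun y => bInd y * fAtom y) x = 0 := by
    simp [hardyOp1, bf_zero]
  rw [hardyComm1, hb, h2, hardyOp1, fAtom_int x (by linarith)]
  ring

/-- With `b = χ_{(2,∞)} ∈ BMO(ℝ)` and the atom-multiple `f₀ = χ_{(0,2)} - χ_{(-2,0)}`,
one has `|[b,H]f₀(x)| = 2/x` for `x > 3`, so `∫_ℝ |[b,H]f₀| = ∞`: the commutator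
`[b,H]` is not bounded from `H¹(ℝ)` to `L¹(ℝ)`. -/
theorem commutator_not_H1_to_L1 :
    (∀ x : ℝ, 3 < x → |hardyComm1 bInd fAtom x| = 2 / x) ∧
    ¬ Integrable (hardyComm1 bInd fAtom) volume := by
  constructor
  · intro x hx
    rw [comm_eq x hx, abs_of_pos (by positivity)]
  · intro h
    have h1 : IntegrableOn (hardyComm1 bInd fAtom) (Set.Ioi (3:ℝ)) volume :=
      h.integrableOn
    have h2 : IntegrableOn (fun x : ℝ => 2 / x) (Set.Ioi (3:ℝ)) volume := by
      refine h1.congr_fun (fun x hx => ?_) measurableSet_Ioi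
      exact comm_eq x hx
    have h3 : IntegrableOn (fun x : ℝ => x ^ (-1:ℝ)) (Set.Ioi (3:ℝ)) volume := by
      have h4 : IntegrableOn (fun x : ℝ => 2⁻¹ * (2 / x)) (Set.Ioi (3:ℝ)) volume :=
        h2.const_mul (2⁻¹ : ℝ)
      refine h4.congr_fun (fun x hx => ?_) measurableSet_Ioi
      have hx0 : (0:ℝ) < x := lt_trans (by norm_num) hx
      rw [Real.rpow_neg_one]
      field_simp
    rw [integrableOn_Ioi_rpow_iff (by norm_num : (0:ℝ) < 3)] at h3
    norm_num at h3
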